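/- Let R = k[x^a, x^{p_1}y^{q_1}, ..., x^{p_t}y^{q_t}, y^b], a 2-dimensional local (after localizing at the homogeneous maximal ideal) ring in which (x^a,y^b) is a system of parameters. Then R is Cohen–Macaulay if and only if λ(R/(x^a,y^b)) = |H|, where H is the subgroup of (ℤ/aℤ) ⊕ (ℤ/bℤ) generated by the (p_i,q_i). -/

import Mathlib

open MvPolynomial

set_option synthInstance.maxHeartbeats 1000000
set_option maxHeartbeats 2000000
set_option maxHeartbeats 40000000


open Module

namespace Stmt5Aux

/-- Componentwise reduction map `ℕ × ℕ →+ ZMod a × ZMod b`. -/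
def pii (a b : ℕ) : (ℕ × ℕ) →+ ZMod a × ZMod b where
  toFun s := ((s.1 : ZMod a), (s.2 : ZMod b))
  map_zero' := by simp
  map_add' x y := by simp

def DaS (a : ℕ) (S : AddSubmonoid (ℕ × ℕ)) : Set (ℕ × ℕ) := {s | ∃ u ∈ S, u + (a, 0) = s}
def DbS (b : ℕ) (S : AddSubmonoid (ℕ × ℕ)) : Set (ℕ × ℕ) := {s | ∃ u ∈ S, u + (0, b) = s}
def BS (a b : ℕ) (S : AddSubmonoid (ℕ × ℕ)) : Set (ℕ × ℕ) :=
  {s | s ∈ S ∧ s ∉ DaS a S ∧ s ∉ DbS b S}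
def RegS (a b : ℕ) (S : AddSubmonoid (ℕ × ℕ)) : Prop :=
  ∀ s ∈ S, s + (0, b) ∈ DaS a S → s ∈ DaS a S

variable {a b : ℕ} {S : AddSubmonoid (ℕ × ℕ)}

lemma pii_a0 : pii a b (a, 0) = 0 := by simp [pii, Prod.ext_iff]
lemma pii_0b : pii a b (0, b) = 0 := by simp [pii, Prod.ext_iff]

lemma exists_B_aux (ha : 0 < a) (hb : 0 < b) :
    ∀ n, ∀ s ∈ S, s.1 + s.2 ≤ n →
      ∃ z ∈ BS a b S, pii a b z = pii a b s ∧ z.1 ≤ s.1 := by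
  intro n
  induction n with
  | zero =>
    intro s hs hn
    refine ⟨s, ⟨hs, ?_, ?_⟩, rfl, le_refl _⟩
    · rintro ⟨u, hu, rfl⟩; simp at hn; omega
    · rintro ⟨u, hu, rfl⟩; simp at hn; omega
  | succ n ih =>
    intro s hs hn
    by_cases hda : s ∈ DaS a S
    · obtain ⟨u, hu, rfl⟩ := hda
      obtain ⟨z, hz, hπ, h1⟩ := ih u hu (by simp at hn ⊢; omega)
      exact ⟨z, hz, by rw [hπ, map_add, pii_a0, add_zero], by simp; omega⟩
    by_cases hdb : s ∈ DbS b S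
    · obtain ⟨u, hu, rfl⟩ := hdb
      obtain ⟨z, hz, hπ, h1⟩ := ih u hu (by simp at hn ⊢; omega)
      exact ⟨z, hz, by rw [hπ, map_add, pii_0b, add_zero], by simpa using h1⟩
    exact ⟨s, ⟨hs, hda, hdb⟩, rfl, le_refl _⟩

lemma exists_B (ha : 0 < a) (hb : 0 < b) {s : ℕ × ℕ} (hs : s ∈ S) :
    ∃ z ∈ BS a b S, pii a b z = pii a b s ∧ z.1 ≤ s.1 :=
  exists_B_aux ha hb (s.1 + s.2) s hs le_rfl

lemma exists_B2_aux (hb : 0 < b) (hSb : (0, b) ∈ S) :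
    ∀ n, ∀ s ∈ S, s.2 ≤ n → s ∉ DaS a S →
      ∃ z ∈ BS a b S, ∃ m : ℕ, z + (0, m * b) = s := by
  intro n
  induction n with
  | zero =>
    intro s hs hn hda
    refine ⟨s, ⟨hs, hda, ?_⟩, 0, by simp⟩
    rintro ⟨u, hu, rfl⟩; simp at hn; omega
  | succ n ih =>
    intro s hs hn hda
    by_cases hdb : s ∈ DbS b S
    · obtain ⟨u, hu, rfl⟩ := hdb
      have hu_da : u ∉ DaS a S := by
        rintro ⟨w, hw, rfl⟩
        exact hda ⟨w + (0, b), S.add_mem hw hSb, by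
          simp only [Prod.ext_iff, Prod.fst_add, Prod.snd_add]
          constructor <;> omega⟩
      obtain ⟨z, hz, m, hm⟩ := ih u hu (by simp only [Prod.snd_add] at hn; omega) hu_da
      have h1 := congrArg Prod.fst hm
      have h2 := congrArg Prod.snd hm
      simp at h1 h2
      refine ⟨z, hz, m + 1, ?_⟩
      have hmb : (m + 1) * b = m * b + b := by ring
      simp only [Prod.ext_iff, Prod.fst_add, Prod.snd_add]
      constructor <;> omega
    exact ⟨s, ⟨hs, hda, hdb⟩, 0, by simp⟩

lemma reg_iter (hSb : (0, b) ∈ S) (hreg : RegS a b S) :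
    ∀ j : ℕ, ∀ s ∈ S, s + (0, j * b) ∈ DaS a S → s ∈ DaS a S := by
  intro j
  induction j with
  | zero => intro s _ h; simpa [Prod.mk_zero_zero] using h
  | succ j ih =>
    intro s hs h
    have h' : (s + (0, b)) + (0, j * b) ∈ DaS a S := by
      have e : ((0 : ℕ), b) + ((0 : ℕ), j * b) = ((0 : ℕ), (j + 1) * b) := by
        simp only [Prod.mk_add_mk, Prod.mk.injEq]
        refine ⟨by norm_num, by ring⟩
      rw [add_assoc, e]; exact h
    exact hreg s hs (ih (s + (0, b)) (S.add_mem hs hSb) h')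

lemma natCast_sub_dvd {n x y : ℕ} (h : (x : ZMod n) = y) (hle : x ≤ y) : n ∣ y - x :=
  (Nat.modEq_iff_dvd' hle).mp ((ZMod.natCast_eq_natCast_iff _ _ _).mp h)

lemma injOn_of_reg (ha : 0 < a) (hb : 0 < b) (hSa : (a, 0) ∈ S) (hSb : (0, b) ∈ S)
    (hreg : RegS a b S) : Set.InjOn (pii a b) (BS a b S) := by
  intro s hs s' hs' heq
  -- split into components
  wlog hle : s.1 ≤ s'.1 generalizing s s' with W
  · exact (W hs' hs heq.symm (le_of_not_ge hle)).symm
  have h1 : (s.1 : ZMod a) = s'.1 := congrArg Prod.fst heq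
  have h2 : (s.2 : ZMod b) = s'.2 := congrArg Prod.snd heq
  obtain ⟨kk, hk⟩ := natCast_sub_dvd h1 hle
  have hk' : s'.1 = s.1 + a * kk := by omega
  rcases le_or_gt s.2 s'.2 with hle2 | hlt2
  · obtain ⟨ll, hl⟩ := natCast_sub_dvd h2 hle2
    have hl' : s'.2 = s.2 + b * ll := by omega
    rcases Nat.eq_zero_or_pos kk with hk0 | hkpos
    · subst hk0
      rcases Nat.eq_zero_or_pos ll with hl0 | hlpos
      · subst hl0; ext <;> omega
      · exfalso
        obtain ⟨c, rfl⟩ : ∃ c, ll = c + 1 := ⟨ll - 1, by omega⟩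
        refine hs'.2.2 ⟨s + c • ((0 : ℕ), b), S.add_mem hs.1 (AddSubmonoid.nsmul_mem S hSb _), ?_⟩
        have e1 : b * (c + 1) = c * b + b := by ring
        simp only [Prod.smul_mk, smul_eq_mul, Prod.mk_add_mk, Prod.ext_iff,
          Prod.fst_add, Prod.snd_add]
        constructor <;> omega
    · exfalso
      obtain ⟨c, rfl⟩ : ∃ c, kk = c + 1 := ⟨kk - 1, by omega⟩
      refine hs'.2.1 ⟨s + c • ((a : ℕ), (0 : ℕ)) + ll • ((0 : ℕ), b),
        S.add_mem (S.add_mem hs.1 (AddSubmonoid.nsmul_mem S hSa _)) (AddSubmonoid.nsmul_mem S hSb _), ?_⟩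
      have e1 : a * (c + 1) = c * a + a := by ring
      have e2 : b * ll = ll * b := by ring
      simp only [Prod.smul_mk, smul_eq_mul, Prod.mk_add_mk, Prod.ext_iff,
        Prod.fst_add, Prod.snd_add]
      constructor <;> omega
  · -- s'.2 < s.2
    obtain ⟨ll, hl⟩ := natCast_sub_dvd h2.symm (le_of_lt hlt2)
    have hllpos : 0 < ll := Nat.pos_of_ne_zero (fun h => by subst h; simp at hl; omega)
    have hl' : s.2 = s'.2 + b * ll := by omega
    obtain ⟨d, rfl⟩ : ∃ d, ll = d + 1 := ⟨ll - 1, by omega⟩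
    rcases Nat.eq_zero_or_pos kk with hk0 | hkpos
    · subst hk0
      exfalso
      refine hs.2.2 ⟨s' + d • ((0 : ℕ), b), S.add_mem hs'.1 (AddSubmonoid.nsmul_mem S hSb _), ?_⟩
      have e1 : b * (d + 1) = d * b + b := by ring
      simp only [Prod.smul_mk, smul_eq_mul, Prod.mk_add_mk, Prod.ext_iff,
        Prod.fst_add, Prod.snd_add]
      constructor <;> omega
    · exfalso
      obtain ⟨c, rfl⟩ : ∃ c, kk = c + 1 := ⟨kk - 1, by omega⟩
      have hmem : s' + ((0 : ℕ), (d + 1) * b) ∈ DaS a S := by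
        refine ⟨s + c • ((a : ℕ), (0 : ℕ)), S.add_mem hs.1 (AddSubmonoid.nsmul_mem S hSa _), ?_⟩
        have e1 : a * (c + 1) = c * a + a := by ring
        have e2 : b * (d + 1) = (d + 1) * b := by ring
        simp only [Prod.smul_mk, smul_eq_mul, Prod.mk_add_mk, Prod.ext_iff,
          Prod.fst_add, Prod.snd_add]
        constructor <;> omega
      exact hs'.2.1 (reg_iter hSb hreg (d + 1) s' hs'.1 hmem)

lemma reg_of_injOn (ha : 0 < a) (hb : 0 < b) (hSa : (a, 0) ∈ S) (hSb : (0, b) ∈ S)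
    (hinj : Set.InjOn (pii a b) (BS a b S)) : RegS a b S := by
  intro s hs hDa
  by_contra hnot
  obtain ⟨s₀, hs₀B, m, hm⟩ := exists_B2_aux hb hSb s.2 s hs le_rfl hnot
  obtain ⟨w, hwS, hweq⟩ := hDa
  obtain ⟨z, hzB, hzπ, hz1⟩ := exists_B ha hb hwS
  have hπ : pii a b z = pii a b s₀ := by
    have e1 : pii a b w = pii a b (s + (0, b)) := by
      rw [← hweq, map_add, pii_a0, add_zero]
    have e2 : pii a b s = pii a b s₀ := by
      rw [← hm, map_add]
      have : pii a b ((0 : ℕ), m * b) = 0 := by simp [pii, Prod.ext_iff]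
      rw [this, add_zero]
    rw [hzπ, e1, map_add, pii_0b, add_zero, e2]
  have hz_eq : z = s₀ := hinj hzB hs₀B hπ
  have hw1 : w.1 + a = s.1 := by
    have := congrArg Prod.fst hweq; simpa using this
  have hs1 : s.1 = s₀.1 := by
    have := congrArg Prod.fst hm; simpa using this.symm
  have hz0 : z.1 = s₀.1 := congrArg Prod.fst hz_eq
  omega

lemma comb_main (ha : 0 < a) (hb : 0 < b) (hSa : (a, 0) ∈ S) (hSb : (0, b) ∈ S)
    (H : AddSubgroup (ZMod a × ZMod b))
    (hH1 : ∀ s ∈ S, pii a b s ∈ H)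
    (hH2 : ∀ h ∈ H, ∃ s ∈ S, pii a b s = h) :
    RegS a b S ↔ Nat.card (BS a b S) = Nat.card H := by
  haveI : NeZero a := ⟨ha.ne'⟩
  haveI : NeZero b := ⟨hb.ne'⟩
  haveI : Finite H := inferInstance
  have hmaps : Set.MapsTo (pii a b) (BS a b S) (H : Set (ZMod a × ZMod b)) :=
    fun s hs => hH1 s hs.1
  have hsurj : Set.SurjOn (pii a b) (BS a b S) (H : Set (ZMod a × ZMod b)) := by
    intro h hh
    obtain ⟨s, hsS, hπ⟩ := hH2 h hh
    obtain ⟨z, hzB, hzπ, _⟩ := exists_B ha hb hsS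
    exact ⟨z, hzB, by rw [hzπ, hπ]⟩
  constructor
  · intro hreg
    have hbij : Set.BijOn (pii a b) (BS a b S) (H : Set (ZMod a × ZMod b)) :=
      ⟨hmaps, injOn_of_reg ha hb hSa hSb hreg, hsurj⟩
    have := Nat.card_congr (Set.BijOn.equiv _ hbij)
    simpa using this
  · intro hcard
    by_contra hnreg
    have hninj : ¬ Set.InjOn (pii a b) (BS a b S) :=
      fun hinj => hnreg (reg_of_injOn ha hb hSa hSb hinj)
    rcases Set.finite_or_infinite (BS a b S) with hfin | hinf
    · haveI : Finite (BS a b S) := hfin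
      set f : BS a b S → H := fun s => ⟨pii a b s, hH1 s s.2.1⟩ with hf
      have hfsurj : Function.Surjective f := by
        rintro ⟨h, hh⟩
        obtain ⟨z, hzB, hzπ⟩ := hsurj hh
        exact ⟨⟨z, hzB⟩, Subtype.ext hzπ⟩
      have hfbij : Function.Bijective f :=
        (Nat.bijective_iff_surjective_and_card f).mpr ⟨hfsurj, hcard⟩
      exact hninj fun x hx y hy hxy =>
        congrArg Subtype.val (hfbij.1 (a₁ := ⟨x, hx⟩) (a₂ := ⟨y, hy⟩) (Subtype.ext hxy))
    · have : Nat.card (BS a b S) = 0 := by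
        haveI := hinf.to_subtype
        exact Nat.card_eq_zero_of_infinite
      rw [this] at hcard
      have : 0 < Nat.card H := Nat.card_pos
      omega



section HB
variable {a b t : ℕ} {p q : Fin t → ℕ}

lemma hH1_lemma (ha : 0 < a) (hb : 0 < b) :
    ∀ s ∈ AddSubmonoid.closure
      (({(a, 0), (0, b)} ∪ Set.range fun i => (p i, q i)) : Set (ℕ × ℕ)),
      pii a b s ∈ AddSubgroup.closure (Set.range fun i => ((p i : ZMod a), (q i : ZMod b))) := by
  intro s hs
  induction hs using AddSubmonoid.closure_induction with
  | mem x hx =>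
    rcases hx with (rfl | rfl) | ⟨i, rfl⟩
    · have : pii a b (a, 0) = 0 := by simp [pii]
      rw [this]; exact zero_mem _
    · have : pii a b (0, b) = 0 := by simp [pii]
      rw [this]; exact zero_mem _
    · exact AddSubgroup.subset_closure ⟨i, by simp [pii]⟩
  | zero =>
    rw [map_zero]; exact zero_mem _
  | add x y _ _ hx hy => rw [map_add]; exact add_mem hx hy

lemma hH2_lemma (ha : 0 < a) (hb : 0 < b) :
    ∀ h ∈ AddSubgroup.closure (Set.range fun i => ((p i : ZMod a), (q i : ZMod b))),
      ∃ s ∈ AddSubmonoid.closure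
        (({(a, 0), (0, b)} ∪ Set.range fun i => (p i, q i)) : Set (ℕ × ℕ)),
        pii a b s = h := by
  haveI : NeZero a := ⟨ha.ne'⟩
  haveI : NeZero b := ⟨hb.ne'⟩
  set S := AddSubmonoid.closure
      (({(a, 0), (0, b)} ∪ Set.range fun i => (p i, q i)) : Set (ℕ × ℕ)) with hS
  set T : AddSubmonoid (ZMod a × ZMod b) :=
    AddSubmonoid.closure (Set.range fun i => ((p i : ZMod a), (q i : ZMod b))) with hT
  have hTS : ∀ h ∈ T, ∃ s ∈ S, pii a b s = h := by
    intro h hh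
    induction hh using AddSubmonoid.closure_induction with
    | mem x hx =>
      obtain ⟨i, rfl⟩ := hx
      exact ⟨(p i, q i), AddSubmonoid.subset_closure (Or.inr ⟨i, rfl⟩), by simp [pii]⟩
    | zero => exact ⟨0, zero_mem _, by simp⟩
    | add x y hx hy ihx ihy =>
      obtain ⟨s, hsS, rfl⟩ := ihx
      obtain ⟨s', hs'S, rfl⟩ := ihy
      exact ⟨s + s', add_mem hsS hs'S, by rw [map_add]⟩
  have hneg : ∀ x ∈ T, -x ∈ T := by
    intro x hx
    have hpos : 0 < addOrderOf x := addOrderOf_pos x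
    have h1 : (addOrderOf x - 1) + 1 = addOrderOf x := by omega
    have hsum : x + (addOrderOf x - 1) • x = 0 := by
      calc x + (addOrderOf x - 1) • x = ((addOrderOf x - 1) + 1) • x := by
            rw [succ_nsmul, add_comm]
        _ = 0 := by rw [h1, addOrderOf_nsmul_eq_zero]
    rw [neg_eq_of_add_eq_zero_right hsum]
    exact AddSubmonoid.nsmul_mem T hx _
  let K : AddSubgroup (ZMod a × ZMod b) :=
    { T with neg_mem' := fun hx => hneg _ hx }
  intro h hh
  have hHK : AddSubgroup.closure (Set.range fun i => ((p i : ZMod a), (q i : ZMod b))) ≤ K :=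
    AddSubgroup.closure_le K |>.mpr (fun x hx => AddSubmonoid.subset_closure hx)
  exact hTS h (hHK hh)



end HB

section Alg


variable {k : Type*} [Field k]

/-- finrank of quotient by span of a sub-family of a basis. -/
lemma finrank_quot {M : Type*} [AddCommGroup M] [Module k M]
    {ι : Type*} (bS : Basis ι k M) (s : Set ι) :
    Module.finrank k (M ⧸ Submodule.span k (bS '' s)) = Nat.card ↥(sᶜ) := by
  classical
  have hdis : Disjoint (Submodule.span k (bS '' s)) (Submodule.span k (bS '' sᶜ)) := by
    rw [Submodule.disjoint_def]
    intro x h1 h2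
    rw [Basis.mem_span_image] at h1 h2
    have hsub : ((bS.repr x).support : Set ι) ⊆ s ∩ sᶜ := Set.subset_inter h1 h2
    rw [Set.inter_compl_self] at hsub
    have h0 : (bS.repr x).support = ∅ :=
      Finset.coe_eq_empty.mp (Set.subset_empty_iff.mp hsub)
    have : bS.repr x = 0 := Finsupp.support_eq_empty.mp h0
    exact bS.repr.map_eq_zero_iff.mp this
  have hcod : Codisjoint (Submodule.span k (bS '' s)) (Submodule.span k (bS '' sᶜ)) := by
    rw [codisjoint_iff, ← Submodule.span_union, ← Set.image_union, Set.union_compl_self,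
      Set.image_univ, Basis.span_eq]
  have e1 := Submodule.quotientEquivOfIsCompl _ _ ⟨hdis, hcod⟩
  have hli : LinearIndependent k (fun i : ↥(sᶜ) => bS (i : ι)) :=
    bS.linearIndependent.comp _ Subtype.val_injective
  have hrange : Set.range (fun i : ↥(sᶜ) => bS (i : ι)) = bS '' sᶜ := by
    rw [show (fun i : ↥(sᶜ) => bS (i : ι)) = ⇑bS ∘ Subtype.val from rfl,
      Set.range_comp, Subtype.range_coe]
  have b2 : Basis ↥(sᶜ) k ↥(Submodule.span k (bS '' sᶜ)) :=
    (Basis.span hli).map (LinearEquiv.ofEq _ _ (by rw [hrange]))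
  rw [LinearEquiv.finrank_eq e1, Module.finrank_eq_nat_card_basis b2]

/-- The ideal generated by two elements acting by shifts on a basis. -/
lemma ideal_pair_restrict {R' : Type*} [CommRing R'] [Algebra k R'] {ι : Type*}
    (bS : Basis ι k R') (x y : R') (f g : ι → ι)
    (hx : ∀ i, x * bS i = bS (f i)) (hy : ∀ i, y * bS i = bS (g i)) :
    (Ideal.span {x, y}).restrictScalars k
      = Submodule.span k (bS '' (Set.range f ∪ Set.range g)) := by
  have key : ∀ (c : R') (w : ι → ι), (∀ i, c * bS i = bS (w i)) → ∀ r : R',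
      c * r ∈ Submodule.span k (bS '' Set.range w) := by
    intro c w hcw r
    have hr : r ∈ Submodule.span k (Set.range bS) := by rw [bS.span_eq]; trivial
    induction hr using Submodule.span_induction with
    | mem z hz =>
      obtain ⟨i, rfl⟩ := hz
      rw [hcw i]
      exact Submodule.subset_span ⟨w i, ⟨i, rfl⟩, rfl⟩
    | zero => rw [mul_zero]; exact zero_mem _
    | add u v _ _ ihu ihv => rw [mul_add]; exact add_mem ihu ihv
    | smul c' u _ ihu => rw [mul_smul_comm]; exact Submodule.smul_mem _ _ ihu
  apply le_antisymm
  · intro z hz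
    rw [Submodule.restrictScalars_mem, Ideal.mem_span_pair] at hz
    obtain ⟨r, s, rfl⟩ := hz
    apply Submodule.add_mem
    · rw [mul_comm]
      exact Submodule.span_mono (Set.image_mono Set.subset_union_left) (key x f hx r)
    · rw [mul_comm]
      exact Submodule.span_mono (Set.image_mono Set.subset_union_right) (key y g hy s)
  · rw [Submodule.span_le]
    rintro _ ⟨i, hi, rfl⟩
    rcases hi with ⟨j, rfl⟩ | ⟨j, rfl⟩
    · show bS (f j) ∈ (Ideal.span {x, y} : Ideal R')
      rw [← hx j]
      exact Ideal.mul_mem_right _ _ (Ideal.subset_span (Set.mem_insert _ _))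
    · show bS (g j) ∈ (Ideal.span {x, y} : Ideal R')
      rw [← hy j]
      exact Ideal.mul_mem_right _ _ (Ideal.subset_span (Set.mem_insert_of_mem _ rfl))


/-- Smul-regularity on a quotient of the ring by an ideal (as module). -/
lemma smulreg_quot_iff {R' : Type*} [CommRing R'] (U : Submodule R' R') (y : R') :
    IsSMulRegular (R' ⧸ U) y ↔ ∀ z : R', y * z ∈ U → z ∈ U := by
  constructor
  · intro h z hz
    have h0 : y • Submodule.Quotient.mk (p := U) z = 0 := by
      rw [← Submodule.Quotient.mk_smul, smul_eq_mul, Submodule.Quotient.mk_eq_zero]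
      exact hz
    have : y • Submodule.Quotient.mk (p := U) z = y • (0 : R' ⧸ U) := by
      rw [h0, smul_zero]
    have := h this
    rwa [← Submodule.Quotient.mk_eq_zero]
  · intro h u v huv
    obtain ⟨z, rfl⟩ := Submodule.Quotient.mk_surjective U u
    obtain ⟨w, rfl⟩ := Submodule.Quotient.mk_surjective U v
    simp only at huv
    rw [← Submodule.Quotient.mk_smul, ← Submodule.Quotient.mk_smul,
      Submodule.Quotient.eq] at huv
    rw [Submodule.Quotient.eq]
    have he : y • z - y • w = y * (z - w) := by
      rw [smul_eq_mul, smul_eq_mul]; ring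
    rw [he] at huv
    exact h _ huv

/-- Multiplication by an element shifting the basis: formula for coordinates. -/
lemma repr_mul_shift {R' : Type*} [CommRing R'] [Algebra k R'] {ι : Type*}
    (bS : Basis ι k R') (y : R') (g : ι → ι)
    (hy : ∀ i, y * bS i = bS (g i)) (z : R') :
    bS.repr (y * z) = Finsupp.mapDomain g (bS.repr z) := by
  classical
  have hmaps : (bS.repr.toLinearMap.comp (LinearMap.mulLeft k y))
      = (Finsupp.lmapDomain k k g).comp bS.repr.toLinearMap := by
    apply bS.ext
    intro i
    simp only [LinearMap.comp_apply, LinearMap.mulLeft_apply, LinearEquiv.coe_coe,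
      Finsupp.lmapDomain_apply]
    rw [hy i, Basis.repr_self, Basis.repr_self, Finsupp.mapDomain_single]
  exact DFunLike.congr_fun hmaps z

lemma mul_shift_mem_span_iff {R' : Type*} [CommRing R'] [Algebra k R'] {ι : Type*}
    (bS : Basis ι k R') (y : R') (g : ι → ι) (hginj : Function.Injective g)
    (hy : ∀ i, y * bS i = bS (g i)) (s : Set ι) (z : R') :
    y * z ∈ Submodule.span k (⇑bS '' s) ↔ ∀ i ∈ (bS.repr z).support, g i ∈ s := by
  classical
  rw [Basis.mem_span_image, repr_mul_shift bS y g hy,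
    Finsupp.mapDomain_support_of_injective hginj]
  rw [Finset.coe_image, Set.image_subset_iff]
  rfl



end Alg

end Stmt5Aux


open Pointwise Stmt5Aux

/-- Let `R = k[xᵃ, x^{p₁}y^{q₁}, …, x^{p_t}y^{q_t}, yᵇ]`, a 2-dimensional ring in which
`(xᵃ, yᵇ)` is a system of parameters.  Then `R` is Cohen–Macaulay (equivalently, `xᵃ, yᵇ`
is a regular sequence on `R`) if and only if `λ(R/(xᵃ,yᵇ)) = |H|`, where `H` is the subgroup
of `(ℤ/a) ⊕ (ℤ/b)` generated by the `(pᵢ, qᵢ)`. -/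
theorem stmt_5 (k : Type*) [Field k] (a b t : ℕ) (ha : 0 < a) (hb : 0 < b)
    (p q : Fin t → ℕ)
    (R : Subalgebra k (MvPolynomial (Fin 2) k))
    (hR : R = Algebra.adjoin k
      (({X 0 ^ a, X 1 ^ b} ∪ Set.range fun i => X 0 ^ (p i) * X 1 ^ (q i)) :
        Set (MvPolynomial (Fin 2) k)))
    (xa yb : R)
    (hxa : (xa : MvPolynomial (Fin 2) k) = X 0 ^ a)
    (hyb : (yb : MvPolynomial (Fin 2) k) = X 1 ^ b)
    (H : AddSubgroup (ZMod a × ZMod b))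
    (hH : H = AddSubgroup.closure (Set.range fun i => ((p i : ZMod a), (q i : ZMod b)))) :
    RingTheory.Sequence.IsRegular R [xa, yb] ↔
      Module.finrank k (R ⧸ (Ideal.span {xa, yb} : Ideal R)) = Nat.card H := by
  classical
  set G : Set (ℕ × ℕ) := ({(a, 0), (0, b)} ∪ Set.range fun i => (p i, q i)) with hG
  set S : AddSubmonoid (ℕ × ℕ) := AddSubmonoid.closure G with hSdef
  have hSa : (a, 0) ∈ S := AddSubmonoid.subset_closure (Set.mem_union_left _ (Set.mem_insert _ _))
  have hSb : (0, b) ∈ S :=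
    AddSubmonoid.subset_closure (Set.mem_union_left _ (Set.mem_insert_of_mem _ rfl))
  -- exponent map and monomials
  set e : ℕ × ℕ → (Fin 2 →₀ ℕ) := fun s => Finsupp.single 0 s.1 + Finsupp.single 1 s.2 with he
  have he_add : ∀ s s' : ℕ × ℕ, e (s + s') = e s + e s' := by
    intro s s'
    simp only [he, Prod.fst_add, Prod.snd_add, Finsupp.single_add]
    abel
  have he_inj : Function.Injective e := by
    intro s s' h
    have h0 := DFunLike.congr_fun h (0 : Fin 2)
    have h1 := DFunLike.congr_fun h (1 : Fin 2)
    simp only [he, Finsupp.add_apply, Finsupp.single_apply] at h0 h1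
    norm_num at h0 h1
    exact Prod.ext h0 h1
  set mono : ℕ × ℕ → MvPolynomial (Fin 2) k := fun s => monomial (e s) 1 with hmono
  have hmono_mul : ∀ s s', mono s * mono s' = mono (s + s') := by
    intro s s'
    simp only [hmono, monomial_mul, one_mul, he_add]
  have hmono_one : mono 0 = 1 := by
    simp only [hmono, he]
    norm_num
  have hXpow : ∀ m n : ℕ, (X 0 : MvPolynomial (Fin 2) k) ^ m * X 1 ^ n = mono (m, n) := by
    intro m n
    rw [X_pow_eq_monomial, X_pow_eq_monomial, monomial_mul, one_mul]
  have hXa : (X 0 : MvPolynomial (Fin 2) k) ^ a = mono (a, 0) := by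
    rw [← hXpow a 0, pow_zero, mul_one]
  have hYb : (X 1 : MvPolynomial (Fin 2) k) ^ b = mono (0, b) := by
    rw [← hXpow 0 b, pow_zero, one_mul]
  -- R as span of monomials
  have hRspan : Subalgebra.toSubmodule R = Submodule.span k (mono '' (S : Set (ℕ × ℕ))) := by
    rw [hR, Algebra.adjoin_eq_span]
    congr 1
    apply Set.Subset.antisymm
    · intro x hx
      induction hx using Submonoid.closure_induction with
      | mem z hz =>
        simp only [Set.mem_union, Set.mem_insert_iff, Set.mem_singleton_iff,
          Set.mem_range] at hz
        rcases hz with (rfl | rfl) | ⟨i, rfl⟩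
        · exact ⟨(a, 0), hSa, hXa.symm⟩
        · exact ⟨(0, b), hSb, hYb.symm⟩
        · exact ⟨(p i, q i),
            AddSubmonoid.subset_closure (Set.mem_union_right _ ⟨i, rfl⟩), (hXpow _ _).symm⟩
      | one => exact ⟨0, zero_mem _, hmono_one⟩
      | mul x y hx hy ihx ihy =>
        obtain ⟨s, hs, rfl⟩ := ihx
        obtain ⟨s', hs', rfl⟩ := ihy
        exact ⟨s + s', add_mem hs hs', (hmono_mul s s').symm⟩
    · rintro x ⟨s, hs, rfl⟩
      induction hs using AddSubmonoid.closure_induction with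
      | mem z hz =>
        simp only [hG, Set.mem_union, Set.mem_insert_iff, Set.mem_singleton_iff,
          Set.mem_range] at hz
        rcases hz with (rfl | rfl) | ⟨i, rfl⟩
        · rw [← hXa]
          exact Submonoid.subset_closure (Set.mem_union_left _ (Set.mem_insert _ _))
        · rw [← hYb]
          exact Submonoid.subset_closure (Set.mem_union_left _ (Set.mem_insert_of_mem _ rfl))
        · rw [← hXpow]
          exact Submonoid.subset_closure (Set.mem_union_right _ ⟨i, rfl⟩)
      | zero =>
        rw [show ((0 : ℕ × ℕ)) = (0 : ℕ × ℕ) from rfl, hmono_one]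
        exact one_mem _
      | add u v hu hv ihu ihv =>
        rw [← hmono_mul]
        exact mul_mem ihu ihv
  -- basis of R indexed by S
  have hmem : ∀ s : ℕ × ℕ, s ∈ S → mono s ∈ R := by
    intro s hs
    rw [← Subalgebra.mem_toSubmodule, hRspan]
    exact Submodule.subset_span ⟨s, hs, rfl⟩
  set wf : S → R := fun s => ⟨mono ↑s, hmem ↑s s.2⟩ with hwf
  have hli : LinearIndependent k wf := by
    apply LinearIndependent.of_comp R.val.toLinearMap
    have h1 : LinearIndependent k (⇑(basisMonomials (Fin 2) k) ∘ (fun s : S => e ↑s)) :=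
      (basisMonomials (Fin 2) k).linearIndependent.comp _
        (fun u v huv => Subtype.ext (he_inj huv))
    have h2 : (⇑R.val.toLinearMap ∘ wf) = (⇑(basisMonomials (Fin 2) k) ∘ (fun s : S => e ↑s)) := by
      funext s
      simp only [Function.comp_apply, AlgHom.toLinearMap_apply, coe_basisMonomials]
      rfl
    rw [h2]
    exact h1
  have hsp : ⊤ ≤ Submodule.span k (Set.range wf) := by
    have hinj := Submodule.map_injective_of_injective (f := R.val.toLinearMap)
      (Subtype.coe_injective)
    have hmap1 : Submodule.map R.val.toLinearMap (Submodule.span k (Set.range wf))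
        = Submodule.span k (mono '' (S : Set (ℕ × ℕ))) := by
      rw [Submodule.map_span]
      congr 1
      ext x
      constructor
      · rintro ⟨_, ⟨s, rfl⟩, rfl⟩
        exact ⟨↑s, s.2, rfl⟩
      · rintro ⟨s, hs, rfl⟩
        exact ⟨wf ⟨s, hs⟩, ⟨⟨s, hs⟩, rfl⟩, rfl⟩
    have hmap2 : Submodule.map R.val.toLinearMap ⊤ = Submodule.span k (mono '' (S : Set (ℕ × ℕ))) := by
      rw [Submodule.map_top, ← hRspan]
      ext x
      simp only [LinearMap.mem_range, AlgHom.toLinearMap_apply, Subalgebra.mem_toSubmodule]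
      constructor
      · rintro ⟨y, rfl⟩
        exact y.2
      · intro hx
        exact ⟨⟨x, hx⟩, rfl⟩
    exact (hinj (hmap2.trans hmap1.symm)).le
  set bS : Basis S k R := Basis.mk hli hsp with hbS
  have hbS_apply : ∀ s, bS s = wf s := fun s => Basis.mk_apply hli hsp s
  have hwmul : ∀ u v : S, wf u * wf v = wf (u + v) := by
    intro u v
    apply Subtype.ext
    have h1 : ((wf u * wf v : R) : MvPolynomial (Fin 2) k) = mono ↑u * mono ↑v := rfl
    rw [h1, hmono_mul]
    rfl
  set sa : S := ⟨(a, 0), hSa⟩ with hsa_def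
  set sb : S := ⟨(0, b), hSb⟩ with hsb_def
  have hxa_w : xa = wf sa := Subtype.ext (by rw [hxa]; exact hXa)
  have hyb_w : yb = wf sb := Subtype.ext (by rw [hyb]; exact hYb)
  set fa : S → S := fun u => sa + u with hfa_def
  set fb : S → S := fun u => sb + u with hfb_def
  have hfa_mul : ∀ i, xa * bS i = bS (fa i) := by
    intro i
    rw [hbS_apply, hbS_apply, hxa_w]
    exact hwmul sa i
  have hfb_mul : ∀ i, yb * bS i = bS (fb i) := by
    intro i
    rw [hbS_apply, hbS_apply, hyb_w]
    exact hwmul sb i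
  have hfa_inj : Function.Injective fa := by
    intro u v h
    have h' : ((a, 0) : ℕ × ℕ) + ↑u = ((a, 0) : ℕ × ℕ) + ↑v := congrArg Subtype.val h
    exact Subtype.ext (add_left_cancel h')
  have hfb_inj : Function.Injective fb := by
    intro u v h
    have h' : ((0, b) : ℕ × ℕ) + ↑u = ((0, b) : ℕ × ℕ) + ↑v := congrArg Subtype.val h
    exact Subtype.ext (add_left_cancel h')
  have hIr := ideal_pair_restrict bS xa yb fa fb hfa_mul hfb_mul
  have hIa : (Ideal.span {xa}).restrictScalars k = Submodule.span k (⇑bS '' Set.range fa) := by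
    have h2 := ideal_pair_restrict bS xa xa fa fa hfa_mul hfa_mul
    rwa [Set.pair_eq_singleton, Set.union_self] at h2
  -- finrank computation
  have hker : LinearMap.ker (Ideal.Quotient.mkₐ k (Ideal.span {xa, yb})).toLinearMap
      = (Ideal.span {xa, yb}).restrictScalars k := by
    ext z
    simp only [LinearMap.mem_ker, AlgHom.toLinearMap_apply, Ideal.Quotient.mkₐ_eq_mk,
      Submodule.restrictScalars_mem]
    exact Ideal.Quotient.eq_zero_iff_mem
  have hsurj2 : Function.Surjective ⇑(Ideal.Quotient.mkₐ k (Ideal.span {xa, yb})).toLinearMap :=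
    Ideal.Quotient.mkₐ_surjective k _
  have e1 := LinearMap.quotKerEquivOfSurjective _ hsurj2
  rw [hker, hIr] at e1
  have hfr : Module.finrank k (R ⧸ (Ideal.span {xa, yb} : Ideal R))
      = Nat.card ↥((Set.range fa ∪ Set.range fb)ᶜ) := by
    rw [← LinearEquiv.finrank_eq e1, finrank_quot]
  -- identify complement with BS
  have hiff : ∀ (x : ℕ × ℕ) (hx : x ∈ S),
      ((⟨x, hx⟩ : S) ∈ (Set.range fa ∪ Set.range fb)ᶜ) ↔ (x ∉ DaS a S ∧ x ∉ DbS b S) := by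
    intro x hx
    simp only [Set.mem_compl_iff, Set.mem_union, not_or]
    constructor
    · rintro ⟨h1, h2⟩
      constructor
      · rintro ⟨u, hu, hueq⟩
        exact h1 ⟨⟨u, hu⟩, Subtype.ext ((add_comm _ _).trans hueq)⟩
      · rintro ⟨u, hu, hueq⟩
        exact h2 ⟨⟨u, hu⟩, Subtype.ext ((add_comm _ _).trans hueq)⟩
    · rintro ⟨h1, h2⟩
      constructor
      · rintro ⟨u, hueq⟩
        refine h1 ⟨↑u, u.2, ?_⟩
        have h' : ((a, 0) : ℕ × ℕ) + ↑u = x := congrArg Subtype.val hueq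
        exact (add_comm _ _).trans h'
      · rintro ⟨u, hueq⟩
        refine h2 ⟨↑u, u.2, ?_⟩
        have h' : ((0, b) : ℕ × ℕ) + ↑u = x := congrArg Subtype.val hueq
        exact (add_comm _ _).trans h'
  have hcardB : Nat.card ↥((Set.range fa ∪ Set.range fb)ᶜ) = Nat.card ↥(BS a b S) := by
    apply Nat.card_congr
    exact {
      toFun := fun u => ⟨↑↑u, (↑u : S).2, (hiff ↑↑u (↑u : S).2).mp u.2⟩
      invFun := fun z => ⟨⟨↑z, z.2.1⟩, (hiff ↑z z.2.1).mpr ⟨z.2.2.1, z.2.2.2⟩⟩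
      left_inv := fun u => Subtype.ext (Subtype.ext rfl)
      right_inv := fun z => Subtype.ext rfl }
  -- regularity
  have hxane : xa ≠ 0 := by
    intro h0
    have h1 : (X 0 : MvPolynomial (Fin 2) k) ^ a = 0 := by
      rw [← hxa, h0]
      rfl
    exact pow_ne_zero a (X_ne_zero (R := k) (0 : Fin 2)) h1
  have hc1 : IsSMulRegular R xa := by
    intro u v huv
    simp only [smul_eq_mul] at huv
    exact mul_left_cancel₀ hxane huv
  have hU : (xa • ⊤ : Submodule R R) = ((Ideal.span {xa} : Ideal R) : Submodule R R) := by
    rw [← Submodule.ideal_span_singleton_smul, smul_eq_mul, Ideal.mul_top]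
  have hc2 : IsSMulRegular (QuotSMulTop xa R) yb ↔ RegS a b S := by
    have base : IsSMulRegular (QuotSMulTop xa R) yb
        ↔ ∀ z : R, yb * z ∈ (xa • ⊤ : Submodule R R) → z ∈ (xa • ⊤ : Submodule R R) :=
      smulreg_quot_iff (xa • ⊤ : Submodule R R) yb
    have hmemiff : ∀ w : R, w ∈ (xa • ⊤ : Submodule R R) ↔ w ∈ (Ideal.span {xa} : Ideal R) :=
      fun w => hU ▸ Iff.rfl
    have base' : IsSMulRegular (QuotSMulTop xa R) yb ↔
        (∀ z : R, yb * z ∈ (Ideal.span {xa} : Ideal R) → z ∈ (Ideal.span {xa} : Ideal R)) := by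
      rw [base]
      exact forall_congr' fun z => imp_congr (hmemiff _) (hmemiff _)
    rw [base']
    constructor
    · intro hC s hs hDa
      have h1 : yb * bS ⟨s, hs⟩ ∈ (Ideal.span {xa} : Ideal R) := by
        rw [hfb_mul]
        obtain ⟨u, hu, hueq⟩ := hDa
        have heq : fb ⟨s, hs⟩ = fa ⟨u, hu⟩ := by
          apply Subtype.ext
          show ((0, b) : ℕ × ℕ) + s = ((a, 0) : ℕ × ℕ) + u
          rw [add_comm ((0, b) : ℕ × ℕ) s, add_comm ((a, 0) : ℕ × ℕ) u]
          exact hueq.symm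
        rw [heq, ← hfa_mul]
        exact Ideal.mul_mem_right _ _ (Ideal.subset_span rfl)
      have h2 := hC _ h1
      have h3 : (bS ⟨s, hs⟩) ∈ (Ideal.span {xa}).restrictScalars k :=
        (Submodule.restrictScalars_mem _ _ _).mpr h2
      rw [hIa, Basis.mem_span_image, Basis.repr_self] at h3
      have h4 : (⟨s, hs⟩ : S) ∈ Set.range fa := by
        apply h3
        simp [Finsupp.support_single_ne_zero]
      obtain ⟨u, hueq⟩ := h4
      refine ⟨↑u, u.2, ?_⟩
      have h' : ((a, 0) : ℕ × ℕ) + ↑u = s := congrArg Subtype.val hueq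
      exact (add_comm _ _).trans h'
    · intro hreg z hz
      have hz' : yb * z ∈ (Ideal.span {xa}).restrictScalars k :=
        (Submodule.restrictScalars_mem _ _ _).mpr hz
      rw [hIa, mul_shift_mem_span_iff bS yb fb hfb_inj hfb_mul] at hz'
      rw [← Submodule.restrictScalars_mem k, hIa, Basis.mem_span_image]
      intro i hi
      obtain ⟨u, hueq⟩ := hz' i hi
      have hDa : (↑i : ℕ × ℕ) + (0, b) ∈ DaS a S := by
        refine ⟨↑u, u.2, ?_⟩
        have h' : ((a, 0) : ℕ × ℕ) + ↑u = ((0, b) : ℕ × ℕ) + ↑i := congrArg Subtype.val hueq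
        calc (↑u : ℕ × ℕ) + (a, 0) = ((a, 0) : ℕ × ℕ) + ↑u := add_comm _ _
          _ = ((0, b) : ℕ × ℕ) + ↑i := h'
          _ = (↑i : ℕ × ℕ) + (0, b) := add_comm _ _
      obtain ⟨v, hv, hveq⟩ := hreg ↑i i.2 hDa
      exact ⟨⟨v, hv⟩, Subtype.ext ((add_comm _ _).trans hveq)⟩
  have hofl : Ideal.ofList [xa, yb] = Ideal.span {xa, yb} := by
    rw [Ideal.ofList_cons, Ideal.ofList_cons, Ideal.ofList_nil, sup_bot_eq, Ideal.span_insert]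
  have h1mem : (1 : R) ∉ Ideal.span {xa, yb} := by
    intro h1
    have h1' : (1 : R) ∈ (Ideal.span {xa, yb}).restrictScalars k :=
      (Submodule.restrictScalars_mem _ _ _).mpr h1
    rw [hIr] at h1'
    have hone : (1 : R) = bS 0 := by
      rw [hbS_apply]
      exact Subtype.ext hmono_one.symm
    rw [hone, Basis.mem_span_image, Basis.repr_self] at h1'
    have h0mem : (0 : S) ∈ Set.range fa ∪ Set.range fb := by
      apply h1'
      simp [Finsupp.support_single_ne_zero]
    rcases h0mem with ⟨u, hueq⟩ | ⟨u, hueq⟩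
    · have h' := congrArg (fun z : S => (↑z : ℕ × ℕ).1) hueq
      have : a + (↑u : ℕ × ℕ).1 = 0 := h'
      omega
    · have h' := congrArg (fun z : S => (↑z : ℕ × ℕ).2) hueq
      have : b + (↑u : ℕ × ℕ).2 = 0 := h'
      omega
  have hne : (⊤ : Submodule R R) ≠ Ideal.ofList [xa, yb] • ⊤ := by
    rw [hofl, smul_eq_mul, Ideal.mul_top]
    intro htop
    exact h1mem (htop ▸ Submodule.mem_top)
  have hreg_iff : RingTheory.Sequence.IsRegular R [xa, yb] ↔ RegS a b S := by
    rw [RingTheory.Sequence.isRegular_iff,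
      RingTheory.Sequence.isWeaklyRegular_cons_iff,
      RingTheory.Sequence.isWeaklyRegular_singleton_iff]
    constructor
    · rintro ⟨⟨_, hw2⟩, _⟩
      exact hc2.mp hw2
    · intro hreg
      exact ⟨⟨hc1, hc2.mpr hreg⟩, hne⟩
  have hH1' : ∀ s ∈ S, pii a b s ∈ H := by
    rw [hH, hSdef, hG]
    exact hH1_lemma ha hb
  have hH2' : ∀ h ∈ H, ∃ s ∈ S, pii a b s = h := by
    rw [hH, hSdef, hG]
    exact hH2_lemma ha hb
  rw [hreg_iff, hfr, hcardB]
  exact comb_main ha hb hSa hSb H hH1' hH2'
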